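/- Under the assumptions of the recursion lemma, if additionally λ_max(M_k) → 0 as k → ∞, then there exists K ∈ ℕ such that for all k ≥ K: [F(x_{k+1}) − F_lb] χ_{k+1}(R) ≤ [F(x_k) − F_lb − (1/2) λ_min(M_k) ‖∇F(x_k)‖²] χ_k(R). -/

import Mathlib

open Filter
open scoped Classical
open scoped RealInnerProductSpace

/-- Indicator: `1` if all iterates up to time `k` stay in the closed ball of radius `R`
around the origin, `0` otherwise. -/
noncomputable def chi {p : ℕ} (x : ℕ → EuclideanSpace ℝ (Fin p)) (k : ℕ) (R : ℝ) : ℝ :=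
  if ∀ j ≤ k, ‖x j‖ ≤ R then 1 else 0

/-- Smallest eigenvalue of a Hermitian real matrix. -/
noncomputable def lamMin {p : ℕ} [NeZero p] {M : Matrix (Fin p) (Fin p) ℝ}
    (hM : M.IsHermitian) : ℝ :=
  Finset.univ.inf' Finset.univ_nonempty hM.eigenvalues

/-- Largest eigenvalue of a Hermitian real matrix. -/
noncomputable def lamMax {p : ℕ} [NeZero p] {M : Matrix (Fin p) (Fin p) ℝ}
    (hM : M.IsHermitian) : ℝ :=
  Finset.univ.sup' Finset.univ_nonempty hM.eigenvalues

section AuxMatrix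
variable {p : ℕ} [NeZero p] {M : Matrix (Fin p) (Fin p) ℝ}

omit [NeZero p] in
lemma aux_toEuclideanLin_eigenvectorBasis (hM : M.IsHermitian) (i : Fin p) :
    Matrix.toEuclideanLin M (hM.eigenvectorBasis i) =
      hM.eigenvalues i • hM.eigenvectorBasis i := by
  apply (WithLp.equiv 2 _).injective
  simp [Matrix.toEuclideanLin_apply, hM.mulVec_eigenvectorBasis i]

omit [NeZero p] in
lemma aux_repr_toEuclideanLin (hM : M.IsHermitian) (v : EuclideanSpace ℝ (Fin p)) (i : Fin p) :
    hM.eigenvectorBasis.repr (Matrix.toEuclideanLin M v) i =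
      hM.eigenvalues i * hM.eigenvectorBasis.repr v i := by
  have hsym : (Matrix.toEuclideanLin M).IsSymmetric :=
    (Matrix.isHermitian_iff_isSymmetric).mp hM
  rw [OrthonormalBasis.repr_apply_apply, OrthonormalBasis.repr_apply_apply, ← hsym,
    aux_toEuclideanLin_eigenvectorBasis hM i, real_inner_smul_left]

omit [NeZero p] in
lemma aux_inner_toEuclideanLin_eq (hM : M.IsHermitian) (v : EuclideanSpace ℝ (Fin p)) :
    ⟪v, Matrix.toEuclideanLin M v⟫ =
      ∑ i, hM.eigenvalues i * (hM.eigenvectorBasis.repr v i)^2 := by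
  rw [← hM.eigenvectorBasis.repr.inner_map_map v (Matrix.toEuclideanLin M v),
    PiLp.inner_apply]
  refine Finset.sum_congr rfl fun i _ => ?_
  simp [aux_repr_toEuclideanLin hM v]
  ring

omit [NeZero p] in
lemma aux_norm_sq_eq_repr (v : EuclideanSpace ℝ (Fin p))
    (b : OrthonormalBasis (Fin p) ℝ (EuclideanSpace ℝ (Fin p))) :
    ‖v‖^2 = ∑ i, (b.repr v i)^2 := by
  rw [← real_inner_self_eq_norm_sq, ← b.repr.inner_map_map v v, PiLp.inner_apply]
  refine Finset.sum_congr rfl fun i _ => ?_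
  simp [sq]

omit [NeZero p] in
lemma aux_norm_toEuclideanLin_sq_eq (hM : M.IsHermitian) (v : EuclideanSpace ℝ (Fin p)) :
    ‖Matrix.toEuclideanLin M v‖^2 =
      ∑ i, (hM.eigenvalues i)^2 * (hM.eigenvectorBasis.repr v i)^2 := by
  rw [aux_norm_sq_eq_repr _ hM.eigenvectorBasis]
  refine Finset.sum_congr rfl fun i _ => ?_
  rw [aux_repr_toEuclideanLin hM v]
  ring

lemma aux_lamMin_le_eigenvalues (hM : M.IsHermitian) (i : Fin p) :
    lamMin hM ≤ hM.eigenvalues i :=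
  Finset.inf'_le _ (Finset.mem_univ i)

lemma aux_eigenvalues_le_lamMax (hM : M.IsHermitian) (i : Fin p) :
    hM.eigenvalues i ≤ lamMax hM :=
  Finset.le_sup' _ (Finset.mem_univ i)

lemma aux_lamMin_mul_norm_sq_le (hM : M.IsHermitian) (v : EuclideanSpace ℝ (Fin p)) :
    lamMin hM * ‖v‖^2 ≤ ⟪v, Matrix.toEuclideanLin M v⟫ := by
  rw [aux_inner_toEuclideanLin_eq hM v, aux_norm_sq_eq_repr v hM.eigenvectorBasis,
    Finset.mul_sum]
  exact Finset.sum_le_sum fun i _ =>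
    mul_le_mul_of_nonneg_right (aux_lamMin_le_eigenvalues hM i) (sq_nonneg _)

lemma aux_norm_toEuclideanLin_sq_le (hM : M.PosDef) (v : EuclideanSpace ℝ (Fin p)) :
    ‖Matrix.toEuclideanLin M v‖^2 ≤ lamMax hM.1 * ⟪v, Matrix.toEuclideanLin M v⟫ := by
  rw [aux_inner_toEuclideanLin_eq hM.1 v, aux_norm_toEuclideanLin_sq_eq hM.1 v, Finset.mul_sum]
  refine Finset.sum_le_sum fun i _ => ?_
  have h1 : (hM.1.eigenvalues i)^2 ≤ lamMax hM.1 * hM.1.eigenvalues i := by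
    rw [sq]
    exact mul_le_mul_of_nonneg_right (aux_eigenvalues_le_lamMax hM.1 i)
      (hM.eigenvalues_pos i).le
  calc (hM.1.eigenvalues i)^2 * (hM.1.eigenvectorBasis.repr v i)^2
      ≤ lamMax hM.1 * hM.1.eigenvalues i * (hM.1.eigenvectorBasis.repr v i)^2 :=
        mul_le_mul_of_nonneg_right h1 (sq_nonneg _)
    _ = lamMax hM.1 * (hM.1.eigenvalues i * (hM.1.eigenvectorBasis.repr v i)^2) := by ring

lemma aux_lamMin_pos (hM : M.PosDef) : 0 < lamMin hM.1 := by
  rw [lamMin, Finset.lt_inf'_iff]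
  exact fun i _ => hM.eigenvalues_pos i

lemma aux_lamMin_le_lamMax (hM : M.IsHermitian) : lamMin hM ≤ lamMax hM :=
  le_trans (aux_lamMin_le_eigenvalues hM ⟨0, Nat.pos_of_ne_zero (NeZero.ne p)⟩)
    (aux_eigenvalues_le_lamMax hM _)

end AuxMatrix

lemma aux_norm_sub_le_of_mem_segment {E : Type*} [NormedAddCommGroup E] [NormedSpace ℝ E]
    {x y z : E} (hz : z ∈ segment ℝ x y) : ‖z - x‖ ≤ ‖y - x‖ := by
  obtain ⟨a, b, ha, hb, hab, rfl⟩ := hz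
  have : a • x + b • y - x = b • (y - x) := by
    have hax : a • x = (1 - b) • x := by rw [← hab]; ring_nf
    rw [hax, smul_sub, sub_smul, one_smul]; abel
  rw [this, norm_smul, Real.norm_eq_abs, abs_of_nonneg hb]
  nlinarith [norm_nonneg (y - x)]

lemma aux_descent_lemma {E : Type*} [NormedAddCommGroup E] [InnerProductSpace ℝ E]
    [CompleteSpace E] (F : E → ℝ) (hdiff : Differentiable ℝ F)
    (L : ℝ) (hL0 : 0 ≤ L) (x y : E)
    (hL : ∀ z ∈ segment ℝ x y, ‖gradient F z - gradient F x‖ ≤ L * ‖z - x‖) :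
    F y ≤ F x + ⟪gradient F x, y - x⟫ + L * ‖y - x‖^2 := by
  set φ := (InnerProductSpace.toDual ℝ E) (gradient F x) with hφ
  have hfd : ∀ z, fderiv ℝ F z = (InnerProductSpace.toDual ℝ E) (gradient F z) :=
    fun z => ((InnerProductSpace.toDual ℝ E).apply_symm_apply _).symm
  have bound : ∀ z ∈ segment ℝ x y, ‖fderiv ℝ F z - φ‖ ≤ L * ‖y - x‖ := by
    intro z hz
    rw [hfd z, hφ, ← map_sub, LinearIsometryEquiv.norm_map]
    exact le_trans (hL z hz)
      (mul_le_mul_of_nonneg_left (aux_norm_sub_le_of_mem_segment hz) hL0)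
  have key := (convex_segment x y).norm_image_sub_le_of_norm_fderiv_le'
    (fun z _ => hdiff z) bound (left_mem_segment ℝ x y) (right_mem_segment ℝ x y)
  have hφa : φ (y - x) = ⟪gradient F x, y - x⟫ := InnerProductSpace.toDual_apply_apply
  rw [hφa] at key
  have h1 : F y - F x - ⟪gradient F x, y - x⟫ ≤ L * ‖y - x‖ * ‖y - x‖ :=
    le_trans (le_abs_self _) key
  nlinarith [sq_abs (‖y - x‖), sq_nonneg (‖y - x‖)]

theorem optimality_gap_recursion_simplified {p : ℕ} [NeZero p]
    (F : EuclideanSpace ℝ (Fin p) → ℝ) (F_lb : ℝ)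
    (hbd : ∀ x, F_lb ≤ F x)
    (hdiff : Differentiable ℝ F)
    (hlip : ∀ K : Set (EuclideanSpace ℝ (Fin p)), IsCompact K →
      ∃ L : ℝ, 0 ≤ L ∧ ∀ x ∈ K, ∀ y ∈ K, ‖gradient F x - gradient F y‖ ≤ L * ‖x - y‖)
    (M : ℕ → Matrix (Fin p) (Fin p) ℝ)
    (hM : ∀ k, (M k).PosDef)
    (hmax0 : Tendsto (fun k => lamMax (hM k).1) atTop (nhds 0))
    (x : ℕ → EuclideanSpace ℝ (Fin p))
    (hx : ∀ k, x (k + 1) = x k - (M k).toEuclideanLin (gradient F (x k)))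
    (R : ℝ) (hR : 0 ≤ R) :
    ∃ K : ℕ, ∀ k : ℕ, K ≤ k →
      (F (x (k + 1)) - F_lb) * chi x (k + 1) R ≤
        (F (x k) - F_lb - (1 / 2) * lamMin (hM k).1 * ‖gradient F (x k)‖ ^ 2)
          * chi x k R := by
  -- gradient bound on the ball of radius R
  obtain ⟨L₀, hL₀0, hL₀⟩ := hlip (Metric.closedBall 0 R) (isCompact_closedBall 0 R)
  set G : ℝ := ‖gradient F 0‖ + L₀ * R with hGdef
  have hG0 : 0 ≤ G := by positivity
  have h0mem : (0 : EuclideanSpace ℝ (Fin p)) ∈ Metric.closedBall 0 R := by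
    simpa [mem_closedBall_zero_iff] using hR
  have hgradbd : ∀ z : EuclideanSpace ℝ (Fin p), ‖z‖ ≤ R → ‖gradient F z‖ ≤ G := by
    intro z hz
    have hzmem : z ∈ Metric.closedBall 0 R := by simpa [mem_closedBall_zero_iff] using hz
    have h1 := hL₀ z hzmem 0 h0mem
    have h2 : ‖gradient F z‖ ≤ ‖gradient F z - gradient F 0‖ + ‖gradient F 0‖ := by
      simpa using norm_add_le (gradient F z - gradient F 0) (gradient F 0)
    have h3 : L₀ * ‖z - 0‖ ≤ L₀ * R := by
      apply mul_le_mul_of_nonneg_left _ hL₀0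
      simpa using hz
    rw [hGdef]; linarith
  -- Lipschitz constant on ball of radius R + G
  obtain ⟨L, hLn, hLip⟩ := hlip (Metric.closedBall 0 (R + G)) (isCompact_closedBall 0 (R + G))
  set L' : ℝ := max L 1 with hL'def
  have hL'1 : (1 : ℝ) ≤ L' := le_max_right L 1
  have hL'0 : (0 : ℝ) < L' := lt_of_lt_of_le one_pos hL'1
  have hLip' : ∀ u ∈ Metric.closedBall (0 : EuclideanSpace ℝ (Fin p)) (R + G),
      ∀ w ∈ Metric.closedBall (0 : EuclideanSpace ℝ (Fin p)) (R + G),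
      ‖gradient F u - gradient F w‖ ≤ L' * ‖u - w‖ := by
    intro u hu w hw
    exact le_trans (hLip u hu w hw)
      (mul_le_mul_of_nonneg_right (le_max_left L 1) (norm_nonneg _))
  -- choose K
  have hev : ∀ᶠ k in atTop, lamMax (hM k).1 < 1 / (2 * L') :=
    hmax0.eventually (gt_mem_nhds (by positivity))
  obtain ⟨K, hK⟩ := eventually_atTop.mp hev
  refine ⟨K, fun k hk => ?_⟩
  have hmaxk : lamMax (hM k).1 ≤ 1 / (2 * L') := (hK k hk).le
  set g := gradient F (x k) with hg
  have hminpos := aux_lamMin_pos (hM k)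
  have hminmax := aux_lamMin_le_lamMax (hM k).1
  have hminb : lamMin (hM k).1 ≤ 1 / (2 * L') := le_trans hminmax hmaxk
  by_cases h1 : ∀ j ≤ k + 1, ‖x j‖ ≤ R
  · have h0 : ∀ j ≤ k, ‖x j‖ ≤ R := fun j hj => h1 j (hj.trans (Nat.le_succ k))
    rw [chi, if_pos h1, chi, if_pos h0, mul_one, mul_one]
    have hxk : ‖x k‖ ≤ R := h0 k le_rfl
    have hxk1 : ‖x (k + 1)‖ ≤ R := h1 (k + 1) le_rfl
    have hxkm : x k ∈ Metric.closedBall (0 : EuclideanSpace ℝ (Fin p)) (R + G) := by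
      simp only [mem_closedBall_zero_iff]; linarith
    have hxk1m : x (k + 1) ∈ Metric.closedBall (0 : EuclideanSpace ℝ (Fin p)) (R + G) := by
      simp only [mem_closedBall_zero_iff]; linarith
    have hseg : segment ℝ (x k) (x (k + 1)) ⊆
        Metric.closedBall (0 : EuclideanSpace ℝ (Fin p)) (R + G) :=
      (convex_closedBall _ _).segment_subset hxkm hxk1m
    have hdesc := aux_descent_lemma F hdiff L' hL'0.le (x k) (x (k + 1))
      (fun z hz => hLip' z (hseg hz) (x k) hxkm)
    have hstep : x (k + 1) - x k = -(Matrix.toEuclideanLin (M k) g) := by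
      rw [hx k, hg]; abel
    rw [hstep, inner_neg_right, norm_neg] at hdesc
    have hq1 := aux_lamMin_mul_norm_sq_le (hM k).1 g
    have hq2 := aux_norm_toEuclideanLin_sq_le (hM k) g
    have hqpos : (0 : ℝ) ≤ ⟪g, Matrix.toEuclideanLin (M k) g⟫ :=
      le_trans (by positivity) hq1
    have hLmax : L' * lamMax (hM k).1 ≤ 1 / 2 := by
      have := mul_le_mul_of_nonneg_left hmaxk hL'0.le
      calc L' * lamMax (hM k).1 ≤ L' * (1 / (2 * L')) := this
        _ = 1 / 2 := by field_simp
    rw [← hg] at hdesc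
    have h4 : L' * ‖Matrix.toEuclideanLin (M k) g‖ ^ 2 ≤
        1 / 2 * ⟪g, Matrix.toEuclideanLin (M k) g⟫ := by
      calc L' * ‖Matrix.toEuclideanLin (M k) g‖ ^ 2
          ≤ L' * (lamMax (hM k).1 * ⟪g, Matrix.toEuclideanLin (M k) g⟫) :=
            mul_le_mul_of_nonneg_left hq2 hL'0.le
        _ = (L' * lamMax (hM k).1) * ⟪g, Matrix.toEuclideanLin (M k) g⟫ := by ring
        _ ≤ 1 / 2 * ⟪g, Matrix.toEuclideanLin (M k) g⟫ :=
            mul_le_mul_of_nonneg_right hLmax hqpos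
    linarith [hq1, hdesc, h4]
  · rw [chi, if_neg h1, mul_zero]
    by_cases h0 : ∀ j ≤ k, ‖x j‖ ≤ R
    · rw [chi, if_pos h0, mul_one]
      have hxk : ‖x k‖ ≤ R := h0 k le_rfl
      have hgG : ‖g‖ ≤ G := hgradbd _ hxk
      set c : ℝ := 1 / (2 * L') with hc
      have hc0 : 0 < c := by positivity
      have hc1 : c ≤ 1 := by
        rw [hc, div_le_one (by positivity)]
        linarith
      set y : EuclideanSpace ℝ (Fin p) := x k - c • g with hy
      have hxkm : x k ∈ Metric.closedBall (0 : EuclideanSpace ℝ (Fin p)) (R + G) := by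
        simp only [mem_closedBall_zero_iff]; linarith
      have hym : y ∈ Metric.closedBall (0 : EuclideanSpace ℝ (Fin p)) (R + G) := by
        simp only [mem_closedBall_zero_iff, hy]
        have : ‖x k - c • g‖ ≤ ‖x k‖ + ‖c • g‖ := norm_sub_le _ _
        have hcg : ‖c • g‖ = c * ‖g‖ := by
          rw [norm_smul, Real.norm_eq_abs, abs_of_pos hc0]
        nlinarith [norm_nonneg g]
      have hseg : segment ℝ (x k) y ⊆
          Metric.closedBall (0 : EuclideanSpace ℝ (Fin p)) (R + G) :=
        (convex_closedBall _ _).segment_subset hxkm hym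
      have hdesc := aux_descent_lemma F hdiff L' hL'0.le (x k) y
        (fun z hz => hLip' z (hseg hz) (x k) hxkm)
      have hstep : y - x k = -(c • g) := by rw [hy]; abel
      rw [hstep, inner_neg_right, norm_neg, real_inner_smul_right,
        real_inner_self_eq_norm_sq, norm_smul, Real.norm_eq_abs, abs_of_pos hc0,
        mul_pow] at hdesc
      -- hdesc : F y ≤ F (x k) + -(c * ‖g‖^2) + L' * (c^2 * ‖g‖^2)
      have hFy := hbd y
      have hcL : L' * c = 1 / 2 := by
        rw [hc]; field_simp
      -- F (x k) - F_lb ≥ c ‖g‖² - L' c² ‖g‖² = c(1 - L'c)‖g‖² = (c/2)‖g‖²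
      -- need (1/2) λmin ‖g‖² ≤ (c/2) ‖g‖², i.e. λmin ≤ c  ✓ (hminb)
      rw [← hg] at hdesc
      have hsq : (0:ℝ) ≤ ‖g‖ ^ 2 := sq_nonneg _
      have e1 : L' * (c ^ 2 * ‖g‖ ^ 2) = 1 / 2 * (c * ‖g‖ ^ 2) := by
        rw [← hcL]; ring
      rw [e1] at hdesc
      have h3 : 1 / 2 * lamMin (hM k).1 * ‖g‖ ^ 2 ≤ 1 / 2 * (c * ‖g‖ ^ 2) := by
        nlinarith [mul_nonneg (sub_nonneg.2 hminb) hsq]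
      linarith
    · rw [chi, if_neg h0, mul_zero]
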